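/- arXiv:2012.06011 — 3 statements merged into one kernel-verified Lean document; each statement's English description precedes it below -/
import Mathlib

section
/- Let K be a projectively faithful lattice polytope in ℝ^n. If K is locally solid (i.e., for every extreme point v of K the set C_v = ⋃_{m≥1} m·((K − v) ∩ ℤ^n) is unperforated), then there exists an integer m ≥ n−1 such that mK ∩ ℤ^n = m·(K ∩ ℤ^n). -/
open Pointwise

/-- The set of lattice points (points with integer coordinates) of `ℝ^n`. -/
def latticePoints (n : ℕ) : Set (Fin n → ℝ) := {x | ∀ i, ∃ z : ℤ, x i = (z : ℝ)}

/-- The `k`-fold Minkowski sum `A + A + ⋯ + A` (`k` times) of a subset `A` of `ℝ^n`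
(by convention the `0`-fold sum is `{0}`). -/
def nsmulSet {n : ℕ} : ℕ → Set (Fin n → ℝ) → Set (Fin n → ℝ)
  | 0, _ => {0}
  | k + 1, A => A + nsmulSet k A

/-- A lattice polytope in `ℝ^n`: the convex hull of a finite nonempty set of lattice points. -/
def IsLatticePolytope {n : ℕ} (K : Set (Fin n → ℝ)) : Prop :=
  ∃ S : Set (Fin n → ℝ), S.Finite ∧ S.Nonempty ∧ S ⊆ latticePoints n ∧ K = convexHull ℝ S

/-- A lattice polytope is projectively faithful if the differences of its lattice points
generate the full lattice `ℤ^n` as an abelian group. -/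
def ProjectivelyFaithful {n : ℕ} (K : Set (Fin n → ℝ)) : Prop :=
  (AddSubgroup.closure ((K ∩ latticePoints n) - (K ∩ latticePoints n)) :
    Set (Fin n → ℝ)) = latticePoints n

/-- The lattice cone `C_v = ⋃_{m ≥ 1} m((K - v) ∩ ℤ^n)` at a point `v`, where `m(⬝)` is
the `m`-fold Minkowski sum. -/
def latticeCone {n : ℕ} (K : Set (Fin n → ℝ)) (v : Fin n → ℝ) : Set (Fin n → ℝ) :=
  ⋃ (m : ℕ) (_ : 1 ≤ m), nsmulSet m (((fun x => x - v) '' K) ∩ latticePoints n)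

/-- `C_v` is unperforated: any lattice point with a positive multiple in `C_v` is itself
in `C_v`. -/
def Unperforated {n : ℕ} (C : Set (Fin n → ℝ)) : Prop :=
  ∀ x ∈ latticePoints n, ∀ m : ℕ, 0 < m → (m : ℝ) • x ∈ C → x ∈ C

/-- A lattice polytope is locally solid if the cone `C_v` is unperforated for every
extreme point `v` of `K`. -/
def LocallySolid {n : ℕ} (K : Set (Fin n → ℝ)) : Prop :=
  ∀ v ∈ K.extremePoints ℝ, Unperforated (latticeCone K v)


/-- a real number is rational -/
def IsRat (x : ℝ) : Prop := ∃ q : ℚ, x = (q : ℝ)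

namespace IsRat
lemma add {a b : ℝ} (ha : IsRat a) (hb : IsRat b) : IsRat (a + b) := by
  obtain ⟨q, rfl⟩ := ha; obtain ⟨r, rfl⟩ := hb; exact ⟨q + r, by push_cast; ring⟩
lemma neg {a : ℝ} (ha : IsRat a) : IsRat (-a) := by
  obtain ⟨q, rfl⟩ := ha; exact ⟨-q, by push_cast; ring⟩
lemma sub {a b : ℝ} (ha : IsRat a) (hb : IsRat b) : IsRat (a - b) := by
  obtain ⟨q, rfl⟩ := ha; obtain ⟨r, rfl⟩ := hb; exact ⟨q - r, by push_cast; ring⟩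
lemma mul {a b : ℝ} (ha : IsRat a) (hb : IsRat b) : IsRat (a * b) := by
  obtain ⟨q, rfl⟩ := ha; obtain ⟨r, rfl⟩ := hb; exact ⟨q * r, by push_cast; ring⟩
lemma div {a b : ℝ} (ha : IsRat a) (hb : IsRat b) : IsRat (a / b) := by
  obtain ⟨q, rfl⟩ := ha; obtain ⟨r, rfl⟩ := hb; exact ⟨q / r, by push_cast; ring⟩
lemma zero : IsRat 0 := ⟨0, by norm_num⟩
lemma one : IsRat 1 := ⟨1, by norm_num⟩
lemma intCast (z : ℤ) : IsRat (z : ℝ) := ⟨z, by push_cast; ring⟩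
lemma natCast (m : ℕ) : IsRat (m : ℝ) := ⟨m, by push_cast; ring⟩
lemma sum {α : Type*} (t : Finset α) (f : α → ℝ) (h : ∀ a ∈ t, IsRat (f a)) :
    IsRat (∑ a ∈ t, f a) := by
  classical
  induction t using Finset.induction with
  | empty => simpa using zero
  | insert _ _ hx ih =>
    rw [Finset.sum_insert hx]
    exact (h _ (Finset.mem_insert_self _ _)).add
      (ih fun a ha => h a (Finset.mem_insert_of_mem ha))
end IsRat

namespace latticePoints
variable {n : ℕ}
lemma zero_mem : (0 : Fin n → ℝ) ∈ latticePoints n := fun i => ⟨0, by simp⟩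
lemma add_mem {x y : Fin n → ℝ} (hx : x ∈ latticePoints n) (hy : y ∈ latticePoints n) :
    x + y ∈ latticePoints n := fun i => by
  obtain ⟨a, ha⟩ := hx i; obtain ⟨b, hb⟩ := hy i
  exact ⟨a + b, by simp [ha, hb]⟩
lemma neg_mem {x : Fin n → ℝ} (hx : x ∈ latticePoints n) : -x ∈ latticePoints n := fun i => by
  obtain ⟨a, ha⟩ := hx i; exact ⟨-a, by simp [ha]⟩
lemma sub_mem {x y : Fin n → ℝ} (hx : x ∈ latticePoints n) (hy : y ∈ latticePoints n) :
    x - y ∈ latticePoints n := by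
  simpa [sub_eq_add_neg] using add_mem hx (neg_mem hy)
lemma natsmul_mem {x : Fin n → ℝ} (hx : x ∈ latticePoints n) (m : ℕ) :
    (m : ℝ) • x ∈ latticePoints n := fun i => by
  obtain ⟨a, ha⟩ := hx i; exact ⟨m * a, by simp [Pi.smul_apply, ha]⟩
lemma isRat_apply {x : Fin n → ℝ} (hx : x ∈ latticePoints n) (j : Fin n) : IsRat (x j) := by
  obtain ⟨a, ha⟩ := hx j; exact ha ▸ IsRat.intCast a
lemma sum_mem {α : Type*} (t : Finset α) (f : α → (Fin n → ℝ))
    (h : ∀ a ∈ t, f a ∈ latticePoints n) : (∑ a ∈ t, f a) ∈ latticePoints n := by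
  classical
  induction t using Finset.induction with
  | empty => simpa using zero_mem
  | insert _ _ hx ih =>
    rw [Finset.sum_insert hx]
    exact add_mem (h _ (Finset.mem_insert_self _ _))
      (ih fun a ha => h a (Finset.mem_insert_of_mem ha))
end latticePoints

namespace nsmulSet
variable {n : ℕ} {A : Set (Fin n → ℝ)}

lemma zero_mem_iff : ∀ {x : Fin n → ℝ}, x ∈ nsmulSet 0 A ↔ x = 0 := Iff.rfl

lemma add_mem : ∀ (k l : ℕ) (x y : Fin n → ℝ), x ∈ nsmulSet k A → y ∈ nsmulSet l A →
    x + y ∈ nsmulSet (k + l) A := by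
  intro k
  induction k with
  | zero =>
    intro l x y hx hy
    rw [Set.mem_singleton_iff.mp hx]
    simpa using hy
  | succ k ih =>
    intro l x y hx hy
    obtain ⟨a, ha, z, hz, rfl⟩ := hx
    have : a + z + y = a + (z + y) := by ring
    rw [this, Nat.succ_add]
    exact ⟨a, ha, z + y, ih l z y hz hy, rfl⟩

lemma zero_mem (h0 : (0 : Fin n → ℝ) ∈ A) : ∀ k, (0 : Fin n → ℝ) ∈ nsmulSet k A := by
  intro k
  induction k with
  | zero => rfl
  | succ k ih => exact ⟨0, h0, 0, ih, by simp⟩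

lemma smul_mem {b : Fin n → ℝ} (hb : b ∈ A) : ∀ c : ℕ, (c : ℝ) • b ∈ nsmulSet c A := by
  intro c
  induction c with
  | zero => simp [nsmulSet]
  | succ c ih =>
    have : ((c + 1 : ℕ) : ℝ) • b = b + (c : ℝ) • b := by push_cast; rw [add_smul, one_smul]; ring_nf
    rw [this]
    exact ⟨b, hb, (c : ℝ) • b, ih, rfl⟩

lemma sum_mem {α : Type*} [DecidableEq α] (t : Finset α) (g : α → (Fin n → ℝ)) (c : α → ℕ)
    (h : ∀ a ∈ t, g a ∈ A) :
    (∑ a ∈ t, (c a : ℝ) • g a) ∈ nsmulSet (∑ a ∈ t, c a) A := by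
  induction t using Finset.induction with
  | empty => simp [nsmulSet]
  | insert _ _ hx ih =>
    rw [Finset.sum_insert hx, Finset.sum_insert hx]
    exact add_mem _ _ _ _ (smul_mem (h _ (Finset.mem_insert_self _ _)) _)
      (ih fun a ha => h a (Finset.mem_insert_of_mem ha))

lemma mono (h0 : (0 : Fin n → ℝ) ∈ A) {k l : ℕ} (hkl : k ≤ l) :
    nsmulSet k A ⊆ nsmulSet l A := by
  intro x hx
  have := add_mem k (l - k) x 0 hx (zero_mem h0 _)
  rwa [add_zero, Nat.add_sub_cancel' hkl] at this

lemma subset_lattice (hA : A ⊆ latticePoints n) : ∀ k, nsmulSet k A ⊆ latticePoints n := by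
  intro k
  induction k with
  | zero => intro x hx; rw [Set.mem_singleton_iff.mp hx]; exact latticePoints.zero_mem
  | succ k ih =>
    rintro x ⟨a, ha, z, hz, rfl⟩
    exact latticePoints.add_mem (hA ha) (ih hz)

lemma exists_rep : ∀ (k : ℕ) (x : Fin n → ℝ), x ∈ nsmulSet k A →
    ∃ f : Fin k → (Fin n → ℝ), (∀ i, f i ∈ A) ∧ ∑ i, f i = x := by
  intro k
  induction k with
  | zero =>
    intro x hx
    exact ⟨fun i => 0, fun i => i.elim0, by simp [Set.mem_singleton_iff.mp hx]⟩
  | succ k ih =>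
    rintro x ⟨a, ha, z, hz, rfl⟩
    obtain ⟨f, hf, hsum⟩ := ih z hz
    refine ⟨Fin.cons a f, ?_, ?_⟩
    · intro i
      refine Fin.cases ?_ ?_ i
      · simpa using ha
      · intro j; simpa using hf j
    · rw [Fin.sum_cons, hsum]

end nsmulSet

/-- Coefficients of a rational vector with respect to linearly independent rational
vectors are rational. -/
lemma rat_coeffs {n : ℕ} : ∀ (k : ℕ) (w : Fin k → (Fin n → ℝ)),
    (∀ i j, IsRat (w i j)) → LinearIndependent ℝ w →
    ∀ c : Fin k → ℝ, (∀ j, IsRat ((∑ i, c i • w i) j)) → ∀ i, IsRat (c i) := by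
  intro k
  induction k with
  | zero => intro _ _ _ _ _ i; exact i.elim0
  | succ k ih =>
    intro w hw hind c hc
    set wl := w (Fin.last k) with hwl
    have hwl0 : wl ≠ 0 := hind.ne_zero (Fin.last k)
    obtain ⟨j₀, hj₀⟩ : ∃ j₀, wl j₀ ≠ 0 := by
      by_contra hcon
      push_neg at hcon
      exact hwl0 (funext hcon)
    -- the elimination map
    set P : (Fin n → ℝ) → (Fin n → ℝ) := fun u => u - (u j₀ / wl j₀) • wl with hP
    have hPwl : P wl = 0 := by simp [hP, div_self hj₀]
    set w' : Fin k → (Fin n → ℝ) := fun i => P (w i.castSucc) with hw'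
    have hw'rat : ∀ i j, IsRat (w' i j) := by
      intro i j
      exact (hw _ j).sub (((hw _ j₀).div (hw _ j₀)).mul (hw _ j))
    -- key algebraic identity : for any coefficients g on Fin k,
    -- ∑ g i • w' i = ∑ g i • w i.castSucc - (stuff) • wl
    have key : ∀ g : Fin k → ℝ, ∑ i, g i • w' i =
        (∑ i, g i • w i.castSucc) - ((∑ i, g i • w i.castSucc) j₀ / wl j₀) • wl := by
      intro g
      have : ∑ i, g i • w' i
          = ∑ i, (g i • w i.castSucc - (g i * (w i.castSucc j₀ / wl j₀)) • wl) := by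
        apply Finset.sum_congr rfl
        intro i _
        simp only [hw', hP, smul_sub, smul_smul]
      rw [this, Finset.sum_sub_distrib, ← Finset.sum_smul]
      congr 1
      rw [Finset.sum_apply]
      rw [Finset.sum_div]
      congr 1
      apply Finset.sum_congr rfl
      intro i _
      rw [Pi.smul_apply, smul_eq_mul, mul_div_assoc]
    -- linear independence of w'
    have hind' : LinearIndependent ℝ w' := by
      rw [Fintype.linearIndependent_iff]
      intro g hg
      rw [key] at hg
      -- coefficients on the original family
      set e : ℝ := -((∑ i, g i • w i.castSucc) j₀ / wl j₀) with he
      have : ∑ i : Fin (k+1), (Fin.lastCases (motive := fun _ => ℝ) e g i) • w i = 0 := by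
        rw [Fin.sum_univ_castSucc]
        simp only [Fin.lastCases_castSucc, Fin.lastCases_last]
        rw [he, neg_smul, ← sub_eq_add_neg]
        exact hg
      have hzero := Fintype.linearIndependent_iff.mp hind _ this
      intro i
      have := hzero i.castSucc
      simpa using this
    -- the equation for the reduced system
    set y : Fin n → ℝ := ∑ i, c i • w i with hy
    have hyeq : ∑ i, c i • w i = ∑ i : Fin k, (c i.castSucc) • w i.castSucc
        + c (Fin.last k) • wl := by
      rw [Fin.sum_univ_castSucc]
    have hkey2 : ∑ i : Fin k, (c i.castSucc) • w' i = y - (y j₀ / wl j₀) • wl := by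
      rw [key]
      have hyy : ∑ i : Fin k, (c i.castSucc) • w i.castSucc = y - c (Fin.last k) • wl := by
        rw [hy, hyeq]; ring_nf
      rw [hyy]
      have h1 : (y - c (Fin.last k) • wl) j₀ = y j₀ - c (Fin.last k) * wl j₀ := by simp
      rw [h1, sub_div]
      have h2 : c (Fin.last k) * wl j₀ / wl j₀ = c (Fin.last k) := by field_simp
      rw [h2, sub_smul]
      module
    have hc' : ∀ j, IsRat ((∑ i : Fin k, (c i.castSucc) • w' i) j) := by
      intro j
      rw [hkey2]
      have : (y - (y j₀ / wl j₀) • wl) j = y j - (y j₀ / wl j₀) * wl j := by simp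
      rw [this]
      exact (hc j).sub (((hc j₀).div (hw _ j₀)).mul (hw _ j))
    have hcs : ∀ i : Fin k, IsRat (c i.castSucc) := ih w' hw'rat hind' _ hc'
    -- now the last coefficient
    intro i
    refine Fin.lastCases ?_ (fun i => hcs i) i
    have hyj : y j₀ = (∑ i : Fin k, c i.castSucc * w i.castSucc j₀)
        + c (Fin.last k) * wl j₀ := by
      have : y j₀ = ∑ i : Fin (k+1), c i * w i j₀ := by
        rw [hy, Finset.sum_apply]
        apply Finset.sum_congr rfl
        intro i _
        simp
      rw [this, Fin.sum_univ_castSucc]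
    have hclast : c (Fin.last k) =
        (y j₀ - ∑ i : Fin k, c i.castSucc * w i.castSucc j₀) / wl j₀ := by
      field_simp
      linarith [hyj]
    rw [hclast]
    refine ((hc j₀).sub (IsRat.sum _ _ ?_)).div (hw _ j₀)
    intro a _
    exact (hcs a).mul (hw _ j₀)

lemma rat_coeffs' {n : ℕ} {ι : Type*} [Fintype ι] (w : ι → (Fin n → ℝ))
    (hw : ∀ i j, IsRat (w i j)) (hind : LinearIndependent ℝ w) (c : ι → ℝ)
    (hc : ∀ j, IsRat ((∑ i, c i • w i) j)) : ∀ i, IsRat (c i) := by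
  have e := Fintype.equivFin ι
  have h1 : LinearIndependent ℝ (w ∘ e.symm) := hind.comp e.symm e.symm.injective
  have h2 : ∀ j, IsRat ((∑ i, (c (e.symm i)) • w (e.symm i)) j) := by
    intro j
    have heq : ∑ i, (c (e.symm i)) • (w (e.symm i)) = ∑ i, c i • w i :=
      Equiv.sum_comp e.symm (fun i => c i • w i)
    rw [heq]; exact hc j
  intro i
  have := rat_coeffs _ (w ∘ e.symm) (fun i j => hw _ j) h1 (c ∘ e.symm) h2 (e i)
  simpa using this

lemma rational_caratheodory {n : ℕ} (V : Set (Fin n → ℝ)) (hVL : V ⊆ latticePoints n)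
    (p : Fin n → ℝ) (hp : p ∈ convexHull ℝ V) (hrat : ∀ j, IsRat (p j)) :
    ∃ t : Finset (Fin n → ℝ), ↑t ⊆ V ∧ t.Nonempty ∧ t.card ≤ n + 1 ∧
      ∃ w : (Fin n → ℝ) → ℝ, (∀ y ∈ t, 0 ≤ w y ∧ IsRat (w y)) ∧
        (∑ y ∈ t, w y) = 1 ∧ (∑ y ∈ t, w y • y) = p := by
  classical
  rw [convexHull_eq_union] at hp
  simp only [Set.mem_iUnion, exists_prop] at hp
  obtain ⟨t, hts, hai, hpt⟩ := hp
  have hcard : t.card ≤ n + 1 := by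
    have h1 := hai.card_le_finrank_succ
    have h2 : Module.finrank ℝ (vectorSpan ℝ (Set.range ((↑) : t → (Fin n → ℝ)))) ≤ n := by
      have h3 := Submodule.finrank_le (vectorSpan ℝ (Set.range ((↑) : t → (Fin n → ℝ))))
      simpa [Module.finrank_pi] using h3
    have h4 : t.card = Fintype.card t := (Fintype.card_coe t).symm
    omega
  rw [Finset.convexHull_eq] at hpt
  obtain ⟨w, hw0, hw1, hwp⟩ := hpt
  rw [Finset.centerMass_eq_of_sum_1 _ _ hw1] at hwp
  simp only [id] at hwp
  have htne : t.Nonempty := by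
    rcases Finset.eq_empty_or_nonempty t with rfl | hne
    · simp at hw1
    · exact hne
  obtain ⟨y₀, hy₀⟩ := htne
  set i₀ : {x // x ∈ t} := ⟨y₀, hy₀⟩ with hi₀
  have hvsub := (affineIndependent_iff_linearIndependent_vsub ℝ
    ((↑) : {x // x ∈ t} → (Fin n → ℝ)) i₀).mp hai
  set u : {i : {x // x ∈ t} // i ≠ i₀} → (Fin n → ℝ) :=
    fun i => ((i : {x // x ∈ t}) : Fin n → ℝ) - y₀ with hu
  have hind : LinearIndependent ℝ u := by
    have : u = fun i : {i : {x // x ∈ t} // i ≠ i₀} =>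
        ((i : {x // x ∈ t}) : Fin n → ℝ) -ᵥ (i₀ : Fin n → ℝ) := by
      funext i; simp [hu, vsub_eq_sub, hi₀]
    rw [this]; exact hvsub
  have hurat : ∀ i j, IsRat (u i j) := by
    intro i j
    have h1 : ((i : {x // x ∈ t}) : Fin n → ℝ) ∈ latticePoints n :=
      hVL (hts (i : {x // x ∈ t}).2)
    have h2 : y₀ ∈ latticePoints n := hVL (hts hy₀)
    have : u i j = ((i : {x // x ∈ t}) : Fin n → ℝ) j - y₀ j := rfl
    rw [this]
    exact (latticePoints.isRat_apply h1 j).sub (latticePoints.isRat_apply h2 j)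
  -- the sum identity
  set f : {x // x ∈ t} → (Fin n → ℝ) := fun i => w ↑i • ((i : Fin n → ℝ) - y₀) with hf
  have hsubty : ∑ i : {i : {x // x ∈ t} // i ≠ i₀}, (w ↑↑i) • u i
      = ∑ i ∈ Finset.univ.erase i₀, f i := by
    rw [Finset.sum_subtype (p := fun i => i ≠ i₀) (Finset.univ.erase i₀)
      (by intro x; simp [Finset.mem_erase]) f]
  have herase : ∑ i ∈ Finset.univ.erase i₀, f i = ∑ i : {x // x ∈ t}, f i := by
    have := Finset.add_sum_erase Finset.univ f (Finset.mem_univ i₀)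
    have hfi₀ : f i₀ = 0 := by simp [hf, hi₀]
    rw [hfi₀, zero_add] at this
    exact this
  have htotal : ∑ i : {x // x ∈ t}, f i = p - y₀ := by
    rw [Finset.sum_coe_sort t (fun y => w y • (y - y₀))]
    have : ∑ y ∈ t, w y • (y - y₀) = (∑ y ∈ t, w y • y) - (∑ y ∈ t, w y) • y₀ := by
      rw [Finset.sum_smul, ← Finset.sum_sub_distrib]
      exact Finset.sum_congr rfl fun y _ => smul_sub (w y) y y₀
    rw [this, hwp, hw1, one_smul]
  have hsum : ∑ i : {i : {x // x ∈ t} // i ≠ i₀}, (w ↑↑i) • u i = p - y₀ := by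
    rw [hsubty, herase, htotal]
  have hwrat' : ∀ i : {i : {x // x ∈ t} // i ≠ i₀}, IsRat (w ↑↑i) := by
    apply rat_coeffs' u hurat hind
    intro j
    rw [hsum]
    have : (p - y₀) j = p j - y₀ j := rfl
    rw [this]
    exact (hrat j).sub (latticePoints.isRat_apply (hVL (hts hy₀)) j)
  have hwrat : ∀ y ∈ t, IsRat (w y) := by
    intro y hy
    by_cases hyy : y = y₀
    · -- w y₀ = 1 - rest
      subst hyy
      have hsplit : w y + ∑ x ∈ t.erase y, w x = 1 := by
        rw [Finset.add_sum_erase t w hy]; exact hw1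
      have hrest : IsRat (∑ x ∈ t.erase y, w x) := by
        apply IsRat.sum
        intro a ha
        have ha' := Finset.mem_erase.mp ha
        exact hwrat' ⟨⟨a, ha'.2⟩, by simp [hi₀, Subtype.ext_iff, ha'.1]⟩
      have : w y = 1 - ∑ x ∈ t.erase y, w x := by linarith
      rw [this]
      exact IsRat.one.sub hrest
    · exact hwrat' ⟨⟨y, hy⟩, by simp [hi₀, Subtype.ext_iff, hyy]⟩
  exact ⟨t, hts, ⟨y₀, hy₀⟩, hcard, w, fun y hy => ⟨hw0 y hy, hwrat y hy⟩, hw1, hwp⟩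

lemma polytope_bound {n : ℕ} {K : Set (Fin n → ℝ)} (S : Set (Fin n → ℝ)) (hSfin : S.Finite)
    (hKS : K = convexHull ℝ S) : ∃ D : ℝ, 0 < D ∧ ∀ y ∈ K, ∀ j, |y j| ≤ D := by
  have hbd : Bornology.IsBounded K := by
    rw [hKS, isBounded_convexHull]
    exact hSfin.isBounded
  obtain ⟨r, hr⟩ := hbd.subset_closedBall 0
  refine ⟨max r 1, by positivity, ?_⟩
  intro y hy j
  have h1 : ‖y‖ ≤ r := by
    have := hr hy
    rwa [Metric.mem_closedBall, dist_zero_right] at this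
  have h2 : |y j| ≤ ‖y‖ := by
    have := norm_le_pi_norm y j
    simpa [Real.norm_eq_abs] using this
  calc |y j| ≤ r := le_trans h2 h1
  _ ≤ max r 1 := le_max_left _ _

lemma finite_lattice_ball (n : ℕ) (R : ℝ) :
    {r : Fin n → ℝ | r ∈ latticePoints n ∧ ∀ j, |r j| ≤ R}.Finite := by
  classical
  set Z : Set (Fin n → ℤ) := Set.pi Set.univ (fun _ => Set.Icc (-⌈R⌉) ⌈R⌉) with hZ
  have hZfin : Z.Finite := Set.Finite.pi (fun _ => Set.finite_Icc _ _)
  apply Set.Finite.subset (hZfin.image (fun z => fun j => (z j : ℝ)))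
  rintro r ⟨hrL, hrR⟩
  choose z hz using hrL
  refine ⟨z, ?_, ?_⟩
  · intro j _
    rw [Set.mem_Icc, ← abs_le]
    have h1 : |(z j : ℝ)| ≤ R := by rw [← hz j]; exact hrR j
    have h2 : |(z j : ℝ)| ≤ (⌈R⌉ : ℝ) := le_trans h1 (Int.le_ceil R)
    have h3 : ((|z j| : ℤ) : ℝ) ≤ ((⌈R⌉ : ℤ) : ℝ) := by push_cast; exact h2
    exact_mod_cast h3
  · funext j
    exact (hz j).symm

lemma sum_mem_dilate {n : ℕ} {K : Set (Fin n → ℝ)} (hconv : Convex ℝ K) (m : ℕ) (hm : 1 ≤ m)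
    (f : Fin m → (Fin n → ℝ)) (hf : ∀ i, f i ∈ K) : (∑ i, f i) ∈ (m : ℝ) • K := by
  have hm0 : (m : ℝ) ≠ 0 := by positivity
  have havg : (m : ℝ)⁻¹ • (∑ i, f i) ∈ K := by
    have := hconv.sum_mem (t := Finset.univ) (w := fun _ : Fin m => (m : ℝ)⁻¹)
      (fun i _ => by positivity) (by simp [Finset.card_univ]; field_simp) (fun i _ => hf i)
    simpa [Finset.smul_sum] using this
  refine ⟨_, havg, ?_⟩
  show (m : ℝ) • ((m:ℝ)⁻¹ • ∑ i, f i) = ∑ i, f i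
  rw [smul_smul]
  field_simp
  rw [one_smul]

namespace latticeCone
variable {n : ℕ} {K : Set (Fin n → ℝ)} {v : Fin n → ℝ}

lemma nsmul_subset {m : ℕ} (hm : 1 ≤ m) :
    nsmulSet m (((fun x => x - v) '' K) ∩ latticePoints n) ⊆ latticeCone K v := by
  intro x hx
  exact Set.mem_iUnion.mpr ⟨m, Set.mem_iUnion.mpr ⟨hm, hx⟩⟩

lemma exists_rep {r : Fin n → ℝ}
    (hr : r ∈ latticeCone K v) :
    ∃ k : ℕ, ∃ f : Fin k → (Fin n → ℝ),
      (∀ i, f i ∈ ((fun x => x - v) '' K) ∩ latticePoints n) ∧ ∑ i, f i = r := by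
  obtain ⟨m, hm⟩ := Set.mem_iUnion.mp hr
  obtain ⟨hm1, hmem⟩ := Set.mem_iUnion.mp hm
  obtain ⟨f, hf, hsum⟩ := nsmulSet.exists_rep m r hmem
  exact ⟨m, f, hf, hsum⟩

end latticeCone

/-- A lattice polytope is the convex hull of its (finitely many) extreme points,
which are lattice points. -/
lemma polytope_structure {n : ℕ} {K : Set (Fin n → ℝ)} (hK : IsLatticePolytope K) :
    (K.extremePoints ℝ).Finite ∧ K.extremePoints ℝ ⊆ latticePoints n ∧
      K = convexHull ℝ (K.extremePoints ℝ) ∧ Convex ℝ K ∧ K.Nonempty := by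
  obtain ⟨S, hSfin, hSne, hSL, rfl⟩ := hK
  have hsub : (convexHull ℝ S).extremePoints ℝ ⊆ S := extremePoints_convexHull_subset
  have hVfin : ((convexHull ℝ S).extremePoints ℝ).Finite := hSfin.subset hsub
  have hcomp : IsCompact (convexHull ℝ S) := hSfin.isCompact_convexHull ℝ
  have hconv : Convex ℝ (convexHull ℝ S) := convex_convexHull ℝ S
  have hKM := closure_convexHull_extremePoints hcomp hconv
  have hclosed : IsClosed (convexHull ℝ ((convexHull ℝ S).extremePoints ℝ)) :=
    (hVfin.isCompact_convexHull ℝ).isClosed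
  refine ⟨hVfin, fun x hx => hSL (hsub hx), ?_, hconv, hSne.mono (subset_convexHull ℝ S)⟩
  conv_lhs => rw [← hKM]
  rw [hclosed.closure_eq]

/-- A lattice point that is a nonnegative rational combination of differences `y - v`
(`y` ranging over lattice points of `K`) lies in the lattice cone at `v`, provided the
cone is unperforated. -/
lemma mem_latticeCone_of_rat_comb {n : ℕ} {K : Set (Fin n → ℝ)} {v : Fin n → ℝ}
    (hvK : v ∈ K) (hvL : v ∈ latticePoints n)
    (hunp : Unperforated (latticeCone K v)) (t : Finset (Fin n → ℝ))
    (ht : ∀ y ∈ t, y ∈ K ∩ latticePoints n)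
    (g : (Fin n → ℝ) → ℝ) (hg : ∀ y ∈ t, 0 ≤ g y ∧ IsRat (g y))
    {r : Fin n → ℝ} (hr : r = ∑ y ∈ t, g y • (y - v)) (hrL : r ∈ latticePoints n) :
    r ∈ latticeCone K v := by
  classical
  set B : Set (Fin n → ℝ) := ((fun x => x - v) '' K) ∩ latticePoints n with hB
  have h0B : (0 : Fin n → ℝ) ∈ B := by
    refine ⟨⟨v, hvK, by simp⟩, latticePoints.zero_mem⟩
  -- rational coefficients
  have hq : ∀ y ∈ t, ∃ q : ℚ, g y = (q : ℝ) ∧ 0 ≤ q := by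
    intro y hy
    obtain ⟨q, hq⟩ := (hg y hy).2
    refine ⟨q, hq, ?_⟩
    have : (0:ℝ) ≤ (q:ℝ) := hq ▸ (hg y hy).1
    exact_mod_cast this
  choose! q hgq hq0 using hq
  set d : ℕ := ∏ y ∈ t, (q y).den with hd
  have hdpos : 0 < d := Finset.prod_pos fun y _ => (q y).pos
  -- natural coefficients
  have hN : ∀ y ∈ t, ∃ N : ℕ, (d : ℝ) * g y = (N : ℝ) := by
    intro y hy
    obtain ⟨e, he⟩ := Finset.dvd_prod_of_mem (fun y => (q y).den) hy
    refine ⟨(q y).num.toNat * e, ?_⟩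
    rw [hgq y hy]
    have hde : (d : ℕ) = (q y).den * e := hd.trans he
    push_cast [Int.toNat_of_nonneg (Rat.num_nonneg.mpr (hq0 y hy)), hde]
    rw [Rat.cast_def]
    have hden : ((q y).den : ℝ) ≠ 0 := by positivity
    field_simp
    have htn : (((q y).num.toNat : ℤ) : ℝ) = ((q y).num : ℝ) := by
      exact_mod_cast congrArg (fun z : ℤ => (z : ℝ)) (Int.toNat_of_nonneg
        (Rat.num_nonneg.mpr (hq0 y hy)))
    push_cast at htn ⊢
    rw [htn]
  choose! N hNg using hN
  -- d • r is in the cone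
  have hdr : (d : ℝ) • r ∈ latticeCone K v := by
    have hdreq : (d : ℝ) • r = ∑ y ∈ t, ((N y : ℕ) : ℝ) • (y - v) := by
      rw [hr, Finset.smul_sum]
      refine Finset.sum_congr rfl fun y hy => ?_
      rw [smul_smul, hNg y hy]
    have hmem : (d : ℝ) • r ∈ nsmulSet (∑ y ∈ t, N y) B := by
      rw [hdreq]
      apply nsmulSet.sum_mem
      intro y hy
      obtain ⟨hyK, hyL⟩ := ht y hy
      exact ⟨⟨y, hyK, rfl⟩, latticePoints.sub_mem hyL hvL⟩
    have hmono := nsmulSet.mono h0B (le_max_left (∑ y ∈ t, N y) 1) hmem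
    exact latticeCone.nsmul_subset (le_max_right _ 1) hmono
  exact hunp r hrL d hdpos hdr

lemma nsmulSet.mem_of_forall_mem {n : ℕ} {A : Set (Fin n → ℝ)} {k : ℕ}
    {f : Fin k → (Fin n → ℝ)} (hf : ∀ i, f i ∈ A) : ∑ i, f i ∈ nsmulSet k A := by
  classical
  have h1 : ∑ i, f i = ∑ i ∈ Finset.univ, ((1 : ℕ) : ℝ) • f i := by simp
  have h2 := nsmulSet.sum_mem (Finset.univ : Finset (Fin k)) f (fun _ => 1)
    (fun i _ => hf i)
  simpa [h1] using h2


/-- Let `K` be a projectively faithful lattice polytope in `ℝ^n`.  If `K` is locally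
solid, then there is an integer `m ≥ n - 1` with `mK ∩ ℤ^n = m(K ∩ ℤ^n)`. -/
theorem exists_dilate_of_locallySolid (n : ℕ) (K : Set (Fin n → ℝ))
    (hK : IsLatticePolytope K) (hpf : ProjectivelyFaithful K)
    (h : LocallySolid K) :
    ∃ m : ℕ, n - 1 ≤ m ∧
      ((m : ℝ) • K) ∩ latticePoints n = nsmulSet m (K ∩ latticePoints n) := by
  classical
  obtain ⟨hVfin, hVL, hKV, hconv, hKne⟩ := polytope_structure hK
  set V : Set (Fin n → ℝ) := K.extremePoints ℝ with hV
  set A : Set (Fin n → ℝ) := K ∩ latticePoints n with hA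
  have hVK : V ⊆ K := extremePoints_subset
  have hVA : V ⊆ A := fun v hv => ⟨hVK hv, hVL hv⟩
  -- bound on K
  obtain ⟨S, hSfin, hSne, hSL, hKS⟩ := hK
  obtain ⟨D, hD0, hD⟩ := polytope_bound S hSfin hKS
  set R : ℝ := (n + 1) * (2 * D) with hR
  set F : Set (Fin n → ℝ) := {r | r ∈ latticePoints n ∧ ∀ j, |r j| ≤ R} with hF
  have hFfin : F.Finite := finite_lattice_ball n R
  -- the finite set of (vertex, remainder) pairs
  set G : Set ((Fin n → ℝ) × (Fin n → ℝ)) :=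
    {z | z.1 ∈ V ∧ z.2 ∈ F ∧ z.2 ∈ latticeCone K z.1} with hG
  have hGfin : G.Finite := by
    apply Set.Finite.subset (hVfin.prod hFfin)
    rintro ⟨v, r⟩ ⟨h1, h2, h3⟩
    exact ⟨h1, h2⟩
  -- representation length function
  set κ : ((Fin n → ℝ) × (Fin n → ℝ)) → ℕ := fun z =>
    if hz : z.2 ∈ latticeCone K z.1 then Classical.choose (latticeCone.exists_rep hz)
    else 0 with hκ
  have κspec : ∀ z : ((Fin n → ℝ) × (Fin n → ℝ)), ∀ hz : z.2 ∈ latticeCone K z.1,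
      ∃ f : Fin (κ z) → (Fin n → ℝ),
        (∀ i, f i ∈ ((fun x => x - z.1) '' K) ∩ latticePoints n) ∧ ∑ i, f i = z.2 := by
    intro z hz
    have hzz : κ z = Classical.choose (latticeCone.exists_rep hz) := by
      simp only [hκ]
      rw [dif_pos hz]
    rw [hzz]
    exact Classical.choose_spec (latticeCone.exists_rep hz)
  set c : ℕ := hGfin.toFinset.sup κ with hc
  have hcbound : ∀ z ∈ G, κ z ≤ c := fun z hz =>
    Finset.le_sup (hGfin.mem_toFinset.mpr hz)
  -- the dilation factor
  have hnm : n + 1 ≤ (n + 1) * (c + 2) := Nat.le_mul_of_pos_right _ (by omega)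
  refine ⟨(n + 1) * (c + 2), by omega, ?_⟩
  set m : ℕ := (n + 1) * (c + 2) with hm
  have hm1 : 1 ≤ m := le_trans (by omega) hnm
  have hmR : (0:ℝ) < (m:ℝ) := by positivity
  apply Set.Subset.antisymm
  · -- hard inclusion
    rintro x ⟨hxK, hxL⟩
    obtain ⟨p, hpK, hpx⟩ := hxK
    have hprat : ∀ j, IsRat (p j) := by
      intro j
      have hxj : x j = (m:ℝ) * p j := by rw [← hpx]; rfl
      have hpj : p j = x j / m := by rw [hxj]; field_simp
      rw [hpj]
      exact (latticePoints.isRat_apply hxL j).div (IsRat.natCast m)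
    rw [hKV] at hpK
    obtain ⟨t, hts, htne, hcard, w, hw, hw1, hwp⟩ :=
      rational_caratheodory V hVL p hpK hprat
    obtain ⟨v, hvt, hvmax⟩ := t.exists_max_image w htne
    have hvV : v ∈ V := hts hvt
    have hvK : v ∈ K := hVK hvV
    have hvL : v ∈ latticePoints n := hVL hvV
    have hunp : Unperforated (latticeCone K v) := h v hvV
    -- the largest weight is at least 1/(n+1)
    have hwv : 1 ≤ ((n:ℝ) + 1) * w v := by
      have h1 : ∑ y ∈ t, w y ≤ t.card • w v :=
        Finset.sum_le_card_nsmul t w (w v) (fun y hy => hvmax y hy)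
      rw [hw1] at h1
      have hwv0 : 0 ≤ w v := (hw v hvt).1
      have h2 : (t.card : ℝ) ≤ (n:ℝ) + 1 := by exact_mod_cast hcard
      have h3 : (1:ℝ) ≤ (t.card : ℝ) * w v := by
        rw [nsmul_eq_mul] at h1; exact h1
      nlinarith
    set t' : Finset (Fin n → ℝ) := t.erase v with ht'
    set μ : (Fin n → ℝ) → ℝ := fun y => (m:ℝ) * w y with hμ
    have hμ0 : ∀ y ∈ t, 0 ≤ μ y := fun y hy => mul_nonneg (le_of_lt hmR) (hw y hy).1
    have hμsum : ∑ y ∈ t, μ y = (m:ℝ) := by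
      rw [hμ, ← Finset.mul_sum, hw1, mul_one]
    -- key identity : x - m v = ∑_{y ∈ t'} μ y (y - v)
    have hxmv : x - (m:ℝ) • v = ∑ y ∈ t', μ y • (y - v) := by
      have e1 : x = ∑ y ∈ t, μ y • y := by
        have hpx' : (m:ℝ) • p = x := hpx
        rw [← hpx', ← hwp, Finset.smul_sum]
        exact Finset.sum_congr rfl fun y hy => by rw [smul_smul]
      have e3 : ∑ y ∈ t, μ y • (y - v) = (∑ y ∈ t, μ y • y) - (∑ y ∈ t, μ y) • v := by
        rw [Finset.sum_smul, ← Finset.sum_sub_distrib]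
        exact Finset.sum_congr rfl fun y _ => smul_sub _ _ _
      have e4 : ∑ y ∈ t, μ y • (y - v) = ∑ y ∈ t', μ y • (y - v) := by
        rw [ht', ← Finset.add_sum_erase t _ hvt]
        simp
      rw [← e4, e3, ← e1, hμsum]
    -- integer and fractional parts
    set cc : (Fin n → ℝ) → ℕ := fun y => ⌊μ y⌋₊ with hcc
    set g : (Fin n → ℝ) → ℝ := fun y => μ y - (cc y : ℝ) with hgdef
    have hg0 : ∀ y ∈ t, 0 ≤ g y ∧ g y < 1 := by
      intro y hy
      constructor
      · simp only [hgdef, sub_nonneg, hcc]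
        exact Nat.floor_le (hμ0 y hy)
      · simp only [hgdef, sub_lt_iff_lt_add, hcc]
        rw [add_comm]
        exact Nat.lt_floor_add_one _
    have hrat_g : ∀ y ∈ t, IsRat (g y) :=
      fun y hy => ((IsRat.natCast m).mul (hw y hy).2).sub (IsRat.natCast (cc y))
    -- the remainder
    set r : Fin n → ℝ := ∑ y ∈ t', g y • (y - v) with hrdef
    have hsplit : ∑ y ∈ t', g y • (y - v)
        = (∑ y ∈ t', μ y • (y - v)) - ∑ y ∈ t', ((cc y : ℕ) : ℝ) • (y - v) := by
      rw [← Finset.sum_sub_distrib]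
      exact Finset.sum_congr rfl fun y _ => by rw [hgdef, sub_smul]
    have hr2 : r = (x - (m:ℝ) • v) - ∑ y ∈ t', ((cc y : ℕ) : ℝ) • (y - v) := by
      rw [hrdef, hsplit, ← hxmv]
    have hrL : r ∈ latticePoints n := by
      rw [hr2]
      apply latticePoints.sub_mem
      · exact latticePoints.sub_mem hxL (latticePoints.natsmul_mem hvL m)
      · apply latticePoints.sum_mem
        intro y hy
        have hyL : y ∈ latticePoints n := hVL (hts (Finset.mem_of_mem_erase hy))
        exact latticePoints.natsmul_mem (latticePoints.sub_mem hyL hvL) (cc y)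
    have hrC : r ∈ latticeCone K v := by
      refine mem_latticeCone_of_rat_comb hvK hvL hunp t' ?_ g ?_ hrdef hrL
      · intro y hy
        exact hVA (hts (Finset.mem_of_mem_erase hy))
      · intro y hy
        have hyt := Finset.mem_of_mem_erase hy
        exact ⟨(hg0 y hyt).1, hrat_g y hyt⟩
    have hrF : r ∈ F := by
      refine ⟨hrL, fun j => ?_⟩
      have happ : r j = ∑ y ∈ t', g y * (y j - v j) := by
        rw [hrdef, Finset.sum_apply]
        exact Finset.sum_congr rfl fun y _ => rfl
      rw [happ]
      have hbd : ∀ y ∈ t', |g y * (y j - v j)| ≤ 2 * D := by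
        intro y hy
        have hyt := Finset.mem_of_mem_erase hy
        have h1 : |g y| ≤ 1 := by
          rw [abs_of_nonneg (hg0 y hyt).1]
          exact le_of_lt (hg0 y hyt).2
        have h2 : |y j - v j| ≤ 2 * D := by
          have hd1 := hD y (hVK (hts hyt)) j
          have hd2 := hD v hvK j
          calc |y j - v j| ≤ |y j| + |v j| := abs_sub _ _
          _ ≤ D + D := add_le_add hd1 hd2
          _ = 2 * D := by ring
        calc |g y * (y j - v j)| = |g y| * |y j - v j| := abs_mul _ _
        _ ≤ 1 * (2 * D) := mul_le_mul h1 h2 (abs_nonneg _) zero_le_one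
        _ = 2 * D := one_mul _
      have hcard' : (t'.card : ℝ) ≤ (n:ℝ) + 1 := by
        have h5 : t'.card ≤ n + 1 := le_trans (Finset.card_erase_le) hcard
        exact_mod_cast h5
      calc |∑ y ∈ t', g y * (y j - v j)| ≤ ∑ y ∈ t', |g y * (y j - v j)| :=
          Finset.abs_sum_le_sum_abs _ _
      _ ≤ ∑ _y ∈ t', 2 * D := Finset.sum_le_sum hbd
      _ = (t'.card : ℝ) * (2 * D) := by rw [Finset.sum_const, nsmul_eq_mul]
      _ ≤ ((n:ℝ) + 1) * (2 * D) := by nlinarith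
      _ = R := by rw [hR]
    -- representation of the remainder in the lattice cone
    have hvrG : (v, r) ∈ G := ⟨hvV, hrF, hrC⟩
    obtain ⟨k, f, hf, hfsum, hkc⟩ : ∃ k : ℕ, ∃ f : Fin k → (Fin n → ℝ),
        (∀ i, f i ∈ ((fun x => x - v) '' K) ∩ latticePoints n) ∧ (∑ i, f i = r) ∧ k ≤ c := by
      obtain ⟨f, hf, hfsum⟩ := κspec (v, r) hrC
      exact ⟨κ (v, r), f, hf, hfsum, hcbound _ hvrG⟩
    -- counting
    set N : ℕ := ∑ y ∈ t', cc y with hN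
    have hNle : (N:ℝ) ≤ (m:ℝ) * (1 - w v) := by
      have h1 : (N:ℝ) = ∑ y ∈ t', ((cc y : ℕ) : ℝ) := by
        rw [hN]; push_cast; rfl
      have h2 : ∑ y ∈ t', ((cc y : ℕ) : ℝ) ≤ ∑ y ∈ t', μ y :=
        Finset.sum_le_sum fun y hy => Nat.floor_le (hμ0 y (Finset.mem_of_mem_erase hy))
      have h3 : ∑ y ∈ t', μ y = (m:ℝ) * (1 - w v) := by
        have h4 : μ v + ∑ y ∈ t', μ y = (m:ℝ) := by
          rw [ht', Finset.add_sum_erase t μ hvt]; exact hμsum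
        have : μ v = (m:ℝ) * w v := rfl
        nlinarith [h4]
      rw [h1]; rw [← h3] at *; linarith
    have hcount : N + k ≤ m := by
      have h1 : (m:ℝ) * w v ≥ (m:ℝ) * (1 / ((n:ℝ)+1)) := by
        have hn1 : (0:ℝ) < (n:ℝ) + 1 := by positivity
        have : 1 / ((n:ℝ)+1) ≤ w v := by
          rw [div_le_iff₀ hn1]; linarith [hwv]
        nlinarith [le_of_lt hmR]
      have h2 : (m:ℝ) * (1 / ((n:ℝ)+1)) = (c:ℝ) + 2 := by
        have : (m:ℝ) = ((n:ℝ)+1) * ((c:ℝ)+2) := by rw [hm]; push_cast; ring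
        rw [this]; field_simp
      have h3 : (k:ℝ) ≤ (c:ℝ) := by exact_mod_cast hkc
      have h4 : (N:ℝ) + (k:ℝ) ≤ (m:ℝ) := by nlinarith [hNle]
      exact_mod_cast h4
    -- final assembly
    have hccsum : ∑ y ∈ t', ((cc y : ℕ) : ℝ) • (y - v)
        = (∑ y ∈ t', ((cc y : ℕ) : ℝ) • y) - (N:ℝ) • v := by
      have e1 : ∑ y ∈ t', ((cc y : ℕ) : ℝ) • (y - v)
          = (∑ y ∈ t', ((cc y : ℕ) : ℝ) • y) - ∑ y ∈ t', ((cc y : ℕ) : ℝ) • v := by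
        rw [← Finset.sum_sub_distrib]
        exact Finset.sum_congr rfl fun y _ => smul_sub _ _ _
      rw [e1, ← Finset.sum_smul]
      congr 2
      rw [hN]; push_cast; rfl
    have hP2 : ∑ i, (f i + v) = r + (k:ℝ) • v := by
      rw [Finset.sum_add_distrib, hfsum]
      congr 1
      rw [Finset.sum_const, Finset.card_univ, Fintype.card_fin,
        ← Nat.cast_smul_eq_nsmul ℝ k v]
    have hcast : ((m - N - k : ℕ) : ℝ) = (m:ℝ) - (N:ℝ) - (k:ℝ) := by
      rw [Nat.cast_sub (by omega), Nat.cast_sub (by omega)]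
    have hx_eq : x = (∑ y ∈ t', ((cc y : ℕ) : ℝ) • y) + (r + (k:ℝ) • v)
        + ((m - N - k : ℕ) : ℝ) • v := by
      rw [hr2, hccsum, hcast]
      module
    rw [hx_eq]
    have hmem1 : (∑ y ∈ t', ((cc y : ℕ) : ℝ) • y) ∈ nsmulSet N A := by
      rw [hN]
      exact nsmulSet.sum_mem t' _ cc (fun y hy => hVA (hts (Finset.mem_of_mem_erase hy)))
    have hmem2 : (r + (k:ℝ) • v) ∈ nsmulSet k A := by
      rw [← hP2]
      apply nsmulSet.mem_of_forall_mem
      intro i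
      obtain ⟨⟨z, hzK, hz⟩, hfL⟩ := hf i
      constructor
      · have : f i + v = z := by rw [← hz]; simp
        rw [this]; exact hzK
      · exact latticePoints.add_mem hfL hvL
    have hmem3 : (((m - N - k : ℕ) : ℝ) • v) ∈ nsmulSet (m - N - k) A :=
      nsmulSet.smul_mem (hVA hvV) _
    have hfinal := nsmulSet.add_mem _ _ _ _
      (nsmulSet.add_mem _ _ _ _ hmem1 hmem2) hmem3
    have hcount2 : N + k + (m - N - k) = m := by omega
    rw [hcount2] at hfinal
    exact hfinal
  · -- easy inclusion
    intro x hx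
    obtain ⟨f, hf, hsum⟩ := nsmulSet.exists_rep m x hx
    constructor
    · rw [← hsum]
      exact sum_mem_dilate hconv m hm1 f (fun i => (hf i).1)
    · exact nsmulSet.subset_lattice (fun y hy => hy.2) m hx
end

section
/- Let K be the convex hull in ℝ^n of {v_1, ..., v_n, 0}, where v_1, ..., v_n ∈ ℤ^n are linearly independent and K is an empty lattice simplex. Suppose x = Σ_{i=1}^n α_i v_i with all α_i ≥ 0, n−1 < Σ α_i ≤ n, x ∈ ℤ^n, and α_i < 1 for every i. Then a contradiction follows; indeed the point y = Σ_{i=1}^n (1 − α_i) v_i lies in K ∩ ℤ^n, hence is an extreme point v_j, forcing Σ α_i = n−1. Consequently, no such x exists: every lattice point x ∈ nK with barycentric coefficients α_i all less than 1 satisfies Σ α_i ≤ n−1. -/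
open Pointwise

/-- Key step in the proof of the decomposition lemma for empty lattice simplices
(`n ≥ 2`): if `K = cvx{v_1, …, v_n, 0}` is an empty lattice simplex with the `v i`
linearly independent lattice vectors, then there is no lattice point
`x = ∑ α i • v i ∈ nK` with all barycentric coefficients `0 ≤ α i < 1` and
`n - 1 < ∑ α i ≤ n`; equivalently, every lattice point of `nK` whose coefficients are
all less than `1` satisfies `∑ α i ≤ n - 1`. -/
theorem empty_simplex_no_bad_point (n : ℕ) (hn : 2 ≤ n)
    (v : Fin n → Fin n → ℝ) (hvL : ∀ i, v i ∈ latticePoints n)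
    (hind : LinearIndependent ℝ v)
    (K : Set (Fin n → ℝ)) (hK : K = convexHull ℝ ({0} ∪ Set.range v))
    (hempty : K ∩ latticePoints n = {0} ∪ Set.range v)
    (α : Fin n → ℝ) (hα0 : ∀ i, 0 ≤ α i) (hα1 : ∀ i, α i < 1)
    (hlow : (n : ℝ) - 1 < ∑ i, α i) (hhigh : ∑ i, α i ≤ (n : ℝ))
    (x : Fin n → ℝ) (hx : x = ∑ i, α i • v i) (hxL : x ∈ latticePoints n) :
    False := by
  classical
  set y : Fin n → ℝ := ∑ i, (1 - α i) • v i with hy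
  -- sum of the coefficients 1 - α i
  have hsum : ∑ i, (1 - α i) = (n : ℝ) - ∑ i, α i := by
    rw [Finset.sum_sub_distrib]
    simp
  -- y is in K
  have hyK : y ∈ K := by
    rw [hK]
    have h := Convex.sum_mem (t := (Finset.univ : Finset (Option (Fin n))))
      (convex_convexHull ℝ ({0} ∪ Set.range v))
      (w := fun o => o.elim (∑ i, α i - ((n : ℝ) - 1)) (fun i => 1 - α i))
      (z := fun o => o.elim 0 v)
      (by
        rintro (_ | i) _
        · simpa using hlow.le
        · simp only [Option.elim]
          linarith [hα1 i])
      (by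
        rw [Fintype.sum_option]
        simp only [Option.elim]
        rw [hsum]; ring)
      (by
        rintro (_ | i) _
        · exact subset_convexHull ℝ _ (Or.inl rfl)
        · exact subset_convexHull ℝ _ (Or.inr ⟨i, rfl⟩))
    rw [Fintype.sum_option] at h
    simpa [hy] using h
  -- y is a lattice point
  have hyL : y ∈ latticePoints n := by
    intro j
    obtain ⟨zx, hzx⟩ := hxL j
    have hv : ∀ i, ∃ z : ℤ, v i j = (z : ℝ) := fun i => hvL i j
    choose zv hzv using hv
    refine ⟨(∑ i, zv i) - zx, ?_⟩
    have hyj : y j = (∑ i, v i j) - x j := by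
      rw [hy, hx]
      simp only [Finset.sum_apply, Pi.smul_apply, smul_eq_mul]
      rw [← Finset.sum_sub_distrib]
      congr 1; ext i; ring
    rw [hyj, hzx]
    push_cast
    congr 1
    exact Finset.sum_congr rfl (fun i _ => hzv i)
  have hy' : y ∈ ({0} ∪ Set.range v : Set (Fin n → ℝ)) := by
    rw [← hempty]; exact ⟨hyK, hyL⟩
  rcases hy' with h0 | ⟨j, hj⟩
  · -- y = 0 : all coefficients vanish, contradicting α i < 1
    have h0' : ∑ i, (1 - α i) • v i = 0 := by
      rw [← hy]; simpa using h0
    have := Fintype.linearIndependent_iff.mp hind (fun i => 1 - α i) h0' ⟨0, by omega⟩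
    linarith [hα1 ⟨0, by omega⟩]
  · -- y = v j
    have h2 : ∑ i, (if i = j then (1:ℝ) else 0) • v i = v j := by
      simp [ite_smul]
    have h0' : ∑ i, ((1 - α i) - if i = j then 1 else 0) • v i = 0 := by
      have h3 : ∑ i, ((1 - α i) - if i = j then 1 else 0) • v i
          = (∑ i, (1 - α i) • v i) - ∑ i, (if i = j then (1:ℝ) else 0) • v i := by
        rw [← Finset.sum_sub_distrib]
        congr 1; ext i; rw [← sub_smul]
      rw [h3, h2, ← hy, hj, sub_self]
    have hall := Fintype.linearIndependent_iff.mp hind _ h0'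
    -- pick an index different from j
    obtain ⟨i, hij⟩ : ∃ i : Fin n, i ≠ j := by
      have : Nontrivial (Fin n) := Fin.nontrivial_iff_two_le.mpr hn
      exact exists_ne j
    have := hall i
    rw [if_neg hij] at this
    linarith [hα1 i]
end

section
/- Let n ≥ 4, let d and a(1), ..., a(n−1) be integers with 0 < a(i) < d for every i and Σ_{i=1}^{n−1} a(i) < d, let a = (a(1), ..., a(n−1), d)^T, and let K be the convex hull in ℝ^n of {0, e_1, ..., e_{n−1}, a}. If a lattice point x in the cone C = ⋃_{i≥1}(iK ∩ ℤ^n) has nonzero last coordinate, then all coordinates of x are strictly positive. -/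
open Pointwise

/-- With `K` the convex hull of `{0, e_1, …, e_{n-1}, a}` as in Example 4 (`n ≥ 4`,
`0 < a i < d` for `i < n - 1`, `∑_{i<n-1} a i < d`, last coordinate of `a` equal to `d`),
any point `x` of the cone `C = ⋃_{i ≥ 1} (iK ∩ ℤ^n)` whose last coordinate is nonzero
has all coordinates strictly positive. -/
theorem example4_cone_positive (n : ℕ) (hn : 4 ≤ n) (d : ℤ) (a : Fin n → ℤ)
    (ha : ∀ i : Fin n, (i : ℕ) < n - 1 → 0 < a i ∧ a i < d)
    (hlast : a ⟨n - 1, by omega⟩ = d)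
    (hsum : ∑ i ∈ Finset.univ.filter (fun i : Fin n => (i : ℕ) < n - 1), a i < d)
    (S : Set (Fin n → ℝ))
    (hS : S = {0} ∪ {x | ∃ i : Fin n, (i : ℕ) < n - 1 ∧ x = Pi.single i 1} ∪
      {fun i => (a i : ℝ)})
    (K : Set (Fin n → ℝ)) (hK : K = convexHull ℝ S)
    (C : Set (Fin n → ℝ))
    (hC : C = ⋃ (i : ℕ) (_ : 1 ≤ i), ((i : ℝ) • K ∩ latticePoints n))
    (x : Fin n → ℝ) (hx : x ∈ C) (hxlast : x ⟨n - 1, by omega⟩ ≠ 0) :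
    ∀ i, 0 < x i := by
  set last : Fin n := ⟨n - 1, by omega⟩ with hlastdef
  have hd : 0 < d := by
    have := ha ⟨0, by omega⟩ (by simp only []; omega)
    omega
  -- The key halfspace set
  set P : Set (Fin n → ℝ) :=
    {y | 0 ≤ y last ∧ ∀ j : Fin n, (j : ℕ) < n - 1 → (a j : ℝ) * y last ≤ (d : ℝ) * y j}
    with hP
  have hPconv : Convex ℝ P := by
    intro y hy z hz s t hs ht hst
    constructor
    · have := hy.1; have := hz.1
      simp only [Pi.add_apply, Pi.smul_apply, smul_eq_mul]
      nlinarith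
    · intro j hj
      have h1 := hy.2 j hj
      have h2 := hz.2 j hj
      have h3 := hy.1
      have h4 := hz.1
      simp only [Pi.add_apply, Pi.smul_apply, smul_eq_mul]
      nlinarith [mul_le_mul_of_nonneg_left h1 hs, mul_le_mul_of_nonneg_left h2 ht]
  have hSP : S ⊆ P := by
    rw [hS]
    rintro y ((rfl | ⟨i, hi, rfl⟩) | rfl)
    · constructor
      · simp
      · intro j hj; simp
    · have hne : i ≠ last := by
        intro h
        rw [h] at hi
        simp [hlastdef] at hi
      constructor
      · rw [Pi.single_eq_of_ne (Ne.symm hne)]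
      · intro j hj
        rw [Pi.single_eq_of_ne (Ne.symm hne)]
        rw [mul_zero]
        rcases eq_or_ne j i with rfl | hji
        · rw [Pi.single_eq_same]
          have : (0:ℝ) < (d:ℝ) := by exact_mod_cast hd
          linarith
        · rw [Pi.single_eq_of_ne hji, mul_zero]
    · constructor
      · simp only [hlastdef]
        rw [hlast]
        exact_mod_cast hd.le
      · intro j hj
        simp only [hlastdef]
        rw [hlast]
        push_cast
        ring_nf
        exact le_refl _
  have hKP : K ⊆ P := by
    rw [hK]
    exact convexHull_min hSP hPconv
  -- unpack x
  rw [hC] at hx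
  simp only [Set.mem_iUnion, Set.mem_inter_iff] at hx
  obtain ⟨m, hm, ⟨y, hyK, rfl⟩, _⟩ := hx
  have hyP := hKP hyK
  have hmpos : (0 : ℝ) < m := by exact_mod_cast hm
  have hylast : 0 < y last := by
    rcases lt_or_eq_of_le hyP.1 with h | h
    · exact h
    · exfalso; apply hxlast
      simp only [Pi.smul_apply, smul_eq_mul, ← hlastdef, ← h]
      ring
  intro i
  simp only [Pi.smul_apply, smul_eq_mul]
  rcases lt_or_ge (i : ℕ) (n - 1) with hi | hi
  · have h1 := hyP.2 i hi
    have h2 := (ha i hi).1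
    have hyi : 0 < y i := by
      have : (0:ℝ) < (a i : ℝ) * y last := by positivity
      have hd' : (0:ℝ) < (d : ℝ) := by exact_mod_cast hd
      nlinarith
    positivity
  · have : i = last := by
      apply Fin.ext
      have := i.isLt
      simp only [hlastdef]
      omega
    rw [this]
    positivity
end
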